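/- Let p ∈ H_0, let p⊕0 ∈ ℝ^{n+1} denote the coordinatewise maximum of p and the origin, i.e. (p⊕0)_i = max(p_i, 0), and let m be the orthogonal projection of p⊕0 onto H_0, i.e. m = p⊕0 − (‖p⊕0‖₁/(n+1))·(1,…,1) where ‖p⊕0‖₁ = Σ_i max(p_i,0). Then d_△(0,m) = d_△(p,m) = ‖p⊕0‖₁/(n+1), and for every m' ∈ H_0 one has max(d_△(0,m'), d_△(p,m')) ≥ ‖p⊕0‖₁/(n+1); that is, m is the △-midpoint of p and the origin and the △-midpoint radius equals ‖p⊕0‖₁/(n+1). -/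

import Mathlib

open Finset

/-- A Laplacian matrix of a multigraph on vertex set `Fin (n+1)`:
symmetric, nonpositive off-diagonal entries, all row sums zero. -/
def IsLaplacian (n : ℕ) (Q : Matrix (Fin (n+1)) (Fin (n+1)) ℤ) : Prop :=
  (∀ i j, Q i j = Q j i) ∧ (∀ i j, i ≠ j → Q i j ≤ 0) ∧ (∀ i, ∑ j, Q i j = 0)

/-- A connected Laplacian matrix: the graph with an edge `{i,j}` whenever
`b_{ij} = -Q i j > 0` is connected. -/
def IsConnectedLaplacian (n : ℕ) (Q : Matrix (Fin (n+1)) (Fin (n+1)) ℤ) : Prop :=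
  IsLaplacian n Q ∧ (SimpleGraph.fromRel (fun i j => Q i j ≠ 0)).Connected

/-- The Laplacian lattice: the subgroup of `ℤ^{n+1}` generated by the rows of `Q`. -/
noncomputable def lapLattice (n : ℕ) (Q : Matrix (Fin (n+1)) (Fin (n+1)) ℤ) :
    AddSubgroup (Fin (n+1) → ℤ) :=
  AddSubgroup.closure (Set.range fun i => Q i)

/-- The hyperplane `H_0 = {x ∈ ℝ^{n+1} : ∑ x i = 0}`. -/
def H0 (n : ℕ) : Set (Fin (n+1) → ℝ) := {x | ∑ i, x i = 0}

/-- The simplicial distance function on `H_0`: `d_△(p,q) = max_i (p i - q i)`. -/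
noncomputable def simpDist (n : ℕ) (p q : Fin (n+1) → ℝ) : ℝ :=
  Finset.univ.sup' Finset.univ_nonempty fun i => p i - q i

/-- Coercion of an integer vector to a real vector. -/
noncomputable def intVec (n : ℕ) (q : Fin (n+1) → ℤ) : Fin (n+1) → ℝ := fun i => (q i : ℝ)

/-- The root lattice `A_n = {x ∈ ℤ^{n+1} : ∑ x i = 0}`. -/
def rootLattice (n : ℕ) : AddSubgroup (Fin (n+1) → ℤ) where
  carrier := {x | ∑ i, x i = 0}
  add_mem' := by
    intro a b ha hb
    simp only [Set.mem_setOf_eq, Pi.add_apply, Finset.sum_add_distrib] at *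
    omega
  zero_mem' := by simp
  neg_mem' := by
    intro a ha
    simp only [Set.mem_setOf_eq, Pi.neg_apply, Finset.sum_neg_distrib] at *
    omega

/-- The `i`-th row of `Q` as a real vector. -/
noncomputable def rowVec (n : ℕ) (Q : Matrix (Fin (n+1)) (Fin (n+1)) ℤ) (i : Fin (n+1)) :
    Fin (n+1) → ℝ := fun j => (Q i j : ℝ)

/-- `u^σ_k = b_{σ(0)} + ⋯ + b_{σ(k)}`. -/
noncomputable def uPerm (n : ℕ) (Q : Matrix (Fin (n+1)) (Fin (n+1)) ℤ)
    (σ : Equiv.Perm (Fin (n+1))) (k : Fin (n+1)) : Fin (n+1) → ℝ :=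
  ∑ j ∈ Finset.Iic k, rowVec n Q (σ j)

/-- The Delaunay polytope of the origin: the union over all permutations `σ`
of the simplices `△_σ = conv{u^σ_0, …, u^σ_n}`. -/
noncomputable def HDel (n : ℕ) (Q : Matrix (Fin (n+1)) (Fin (n+1)) ℤ) :
    Set (Fin (n+1) → ℝ) :=
  ⋃ σ : Equiv.Perm (Fin (n+1)), convexHull ℝ (Set.range (uPerm n Q σ))

/-- `u_S = ∑_{i ∈ S} b_i`, as a real vector. -/
noncomputable def uCut (n : ℕ) (Q : Matrix (Fin (n+1)) (Fin (n+1)) ℤ)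
    (S : Finset (Fin (n+1))) : Fin (n+1) → ℝ := ∑ i ∈ S, rowVec n Q i

/-- for `p ∈ H_0`, the projection `m` of the coordinatewise maximum
`p ⊕ 0` onto `H_0` is the `△`-midpoint of `p` and the origin, and the
`△`-midpoint radius is `‖p ⊕ 0‖₁/(n+1)`. -/
theorem trop_midpoint (n : ℕ) (hn : 1 ≤ n) (p : Fin (n+1) → ℝ) (hp : p ∈ H0 n) :
    simpDist n 0 (fun i => max (p i) 0 - (∑ j, max (p j) 0) / (n + 1)) =
        (∑ j, max (p j) 0) / (n + 1) ∧
    simpDist n p (fun i => max (p i) 0 - (∑ j, max (p j) 0) / (n + 1)) =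
        (∑ j, max (p j) 0) / (n + 1) ∧
    ∀ m' ∈ H0 n, (∑ j, max (p j) 0) / (n + 1) ≤
        max (simpDist n 0 m') (simpDist n p m') := by
  have hpos : (0:ℝ) < (n:ℝ) + 1 := by positivity
  have hp0 : ∑ i, p i = 0 := hp
  obtain ⟨i0, -, hi0⟩ := Finset.exists_le_of_sum_le (f := p)
    (g := fun _ => (0:ℝ)) Finset.univ_nonempty (by simp [hp0])
  obtain ⟨i1, -, hi1⟩ := Finset.exists_le_of_sum_le (f := fun _ => (0:ℝ))
    (g := p) Finset.univ_nonempty (by simp [hp0])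
  refine ⟨?_, ?_, ?_⟩
  · apply le_antisymm
    · apply Finset.sup'_le
      intro i _
      have : 0 ≤ max (p i) 0 := le_max_right _ _
      simp only [Pi.zero_apply]
      linarith
    · unfold simpDist
      have h : (∑ j, max (p j) 0) / (n + 1) =
          (0 : Fin (n+1) → ℝ) i0 - (max (p i0) 0 - (∑ j, max (p j) 0) / (n + 1)) := by
        simp [max_eq_right hi0]
      exact le_trans (le_of_eq h) (Finset.le_sup'
        (f := fun i => (0 : Fin (n+1) → ℝ) i -
          (fun i => max (p i) 0 - (∑ j, max (p j) 0) / (n + 1)) i)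
        (Finset.mem_univ i0))
  · apply le_antisymm
    · apply Finset.sup'_le
      intro i _
      have : p i ≤ max (p i) 0 := le_max_left _ _
      simp only []
      linarith
    · unfold simpDist
      have h : (∑ j, max (p j) 0) / (n + 1) =
          p i1 - (max (p i1) 0 - (∑ j, max (p j) 0) / (n + 1)) := by
        rw [max_eq_left hi1]; ring
      exact le_trans (le_of_eq h) (Finset.le_sup'
        (f := fun i => p i -
          (fun i => max (p i) 0 - (∑ j, max (p j) 0) / (n + 1)) i)
        (Finset.mem_univ i1))
  · intro m' hm'
    have hm'0 : ∑ i, m' i = 0 := hm'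
    set R := max (simpDist n 0 m') (simpDist n p m') with hR
    have h1 : ∀ i, -(m' i) ≤ R := by
      intro i
      refine le_trans ?_ (le_max_left _ _)
      have := Finset.le_sup' (b := i)
        (f := fun i => (0 : Fin (n+1) → ℝ) i - m' i) (Finset.mem_univ i)
      simpa only [simpDist, Pi.zero_apply, zero_sub] using this
    have h2 : ∀ i, p i - m' i ≤ R := by
      intro i
      refine le_trans ?_ (le_max_right _ _)
      exact Finset.le_sup' (f := fun i => p i - m' i) (Finset.mem_univ i)
    have key : ∀ i, max (p i) 0 ≤ m' i + R := by
      intro i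
      exact max_le (by linarith [h2 i]) (by linarith [h1 i])
    have hsum : ∑ j, max (p j) 0 ≤ ((n:ℝ) + 1) * R := by
      calc ∑ j, max (p j) 0 ≤ ∑ j, (m' j + R) :=
            Finset.sum_le_sum fun j _ => key j
        _ = ((n:ℝ) + 1) * R := by
            rw [Finset.sum_add_distrib, hm'0]
            simp [Finset.card_univ, mul_comm]
    rw [div_le_iff₀ hpos]
    linarith [hsum]
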